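/- Let q be a prime power and m ≥ 1. For any nonzero K ∈ F_q, ψ_m(K) = Σ_{i=0}^{m−1} C(m,i) (2q−1)^i (q−1)^{m−i} |S_{m−i}(K)|, where ψ_m(K) is the number of 2m-tuples in F_q^{2m} with Σ x_j y_j = K and |S_t(K)| = ((q−1)^t − (−1)^t)/q. -/

import Mathlib

open Finset

private lemma pair_count_zero' (F : Type*) [Field F] [Fintype F] [DecidableEq F] :
    (univ.filter (fun p : F × F => p.1 * p.2 = 0)).card = 2 * Fintype.card F - 1 := by
  have h1 : (univ.filter (fun p : F × F => p.1 * p.2 = 0))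
      = ({0} ×ˢ univ) ∪ (univ ×ˢ {0}) := by
    ext p
    simp only [mem_filter, mem_univ, true_and, mem_union, mem_product, mem_singleton,
      mul_eq_zero, and_true, true_and]
  rw [h1, card_union]
  have h2 : (({0} ×ˢ univ) ∩ (univ ×ˢ {0}) : Finset (F × F)) = {((0:F),(0:F))} := by
    ext p
    simp only [mem_inter, mem_product, mem_singleton, mem_univ, and_true, true_and,
      Prod.ext_iff]
  rw [h2]
  simp only [card_product, card_singleton, card_univ]
  omega

private lemma pair_count_ne' (F : Type*) [Field F] [Fintype F] [DecidableEq F]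
    (a : F) (ha : a ≠ 0) :
    (univ.filter (fun p : F × F => p.1 * p.2 = a)).card = Fintype.card F - 1 := by
  have h : (univ.filter (fun x : F => x ≠ 0)).card = Fintype.card F - 1 := by
    rw [filter_ne', card_erase_of_mem (mem_univ _), card_univ]
  rw [← h]
  apply Finset.card_bij' (fun p _ => p.1) (fun x _ => (x, x⁻¹ * a))
  · intro p hp; simp only [mem_filter, mem_univ, true_and] at hp ⊢
    intro h0; rw [h0, zero_mul] at hp; exact ha hp.symm
  · intro x hx; simp only [mem_filter, mem_univ, true_and] at hx ⊢; field_simp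
  · intro p hp; simp only [mem_filter, mem_univ, true_and] at hp
    have h1 : p.1 ≠ 0 := by intro h0; rw [h0, zero_mul] at hp; exact ha hp.symm
    have : p.2 = p.1⁻¹ * a := by field_simp; rw [mul_comm]; exact hp
    exact Prod.ext rfl this.symm
  · intro x hx; rfl

private lemma zeroset_count (F : Type*) [Field F] [Fintype F] [DecidableEq F] (m : ℕ) (K : F)
    (s : Finset (Fin m)) :
    (univ.filter (fun g : Fin m → F => (∑ j, g j = K) ∧ ∀ j, g j = 0 ↔ j ∈ s)).card
      = (univ.filter (fun y : Fin (m - s.card) → F => (∀ j, y j ≠ 0) ∧ ∑ j, y j = K)).card := by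
  set c : Finset (Fin m) := univ \ s with hc_def
  have hc : c.card = m - s.card := by
    rw [hc_def, card_sdiff_of_subset (subset_univ s), card_univ, Fintype.card_fin]
  have hmem : ∀ j, j ∈ c ↔ j ∉ s := by intro j; simp [hc_def]
  set e := c.orderIsoOfFin hc with he
  refine Finset.card_bij' (fun g _ => fun k => g (e k))
    (fun y _ => fun j => if h : j ∈ c then y (e.symm ⟨j, h⟩) else 0) ?_ ?_ ?_ ?_
  · intro g hg
    simp only [mem_filter, mem_univ, true_and] at hg ⊢
    obtain ⟨hsum, hzero⟩ := hg
    refine ⟨fun k hk0 => ((hmem _).1 (e k).2) ((hzero _).1 hk0), ?_⟩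
    have h1 : ∑ k, g (e k) = ∑ j ∈ c, g j := by
      rw [← Finset.sum_coe_sort c g]
      exact Fintype.sum_equiv e.toEquiv _ _ (fun k => rfl)
    have h2 : ∑ j ∈ c, g j + ∑ j ∈ s, g j = ∑ j, g j := Finset.sum_sdiff (subset_univ s)
    have h3 : ∑ j ∈ s, g j = 0 := Finset.sum_eq_zero fun j hj => (hzero j).2 hj
    rw [h1]
    rw [h3, add_zero] at h2
    rw [h2, hsum]
  · intro y hy
    simp only [mem_filter, mem_univ, true_and] at hy ⊢
    obtain ⟨hne, hsum⟩ := hy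
    constructor
    · have h2 : ∑ j ∈ c, (if h : j ∈ c then y (e.symm ⟨j, h⟩) else 0)
          + ∑ j ∈ s, (if h : j ∈ c then y (e.symm ⟨j, h⟩) else 0)
          = ∑ j, (if h : j ∈ c then y (e.symm ⟨j, h⟩) else 0) :=
        Finset.sum_sdiff (subset_univ s)
      have h3 : ∑ j ∈ s, (if h : j ∈ c then y (e.symm ⟨j, h⟩) else 0) = 0 :=
        Finset.sum_eq_zero fun j hj => dif_neg (fun hjc => (hmem j).1 hjc hj)
      have h4 : ∑ j ∈ c, (if h : j ∈ c then y (e.symm ⟨j, h⟩) else 0)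
          = ∑ k, y k := by
        rw [← Finset.sum_coe_sort c]
        rw [show (fun j : c => if h : (j : Fin m) ∈ c then y (e.symm ⟨j, h⟩) else 0)
            = fun j : c => y (e.symm j) from funext fun j => by rw [dif_pos j.2]]
        exact (Fintype.sum_equiv e.symm.toEquiv _ _ (fun j => rfl))
      rw [← h2, h3, add_zero, h4, hsum]
    · intro j
      constructor
      · intro h0
        by_contra hjs
        rw [dif_pos ((hmem j).2 hjs)] at h0
        exact hne _ h0
      · intro hjs
        exact dif_neg (fun hjc => (hmem j).1 hjc hjs)
  · intro g hg
    simp only [mem_filter, mem_univ, true_and] at hg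
    funext j
    by_cases hj : j ∈ c
    · simp only [dif_pos hj, OrderIso.apply_symm_apply]
    · simp only [dif_neg hj]
      have : j ∈ s := by by_contra h; exact hj ((hmem j).2 h)
      exact ((hg.2 j).2 this).symm
  · intro y hy
    funext k
    simp only [dif_pos (e k).2]
    congr
    rw [show (⟨(e k : Fin m), (e k).2⟩ : {x // x ∈ c}) = e k from rfl, OrderIso.symm_apply_apply]

theorem psi_m_sum_formula
    (F : Type*) [Field F] [Fintype F] [DecidableEq F]
    (m : ℕ) (hm : 1 ≤ m) (K : F) (hK : K ≠ 0) :
    (Finset.univ.filter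
        (fun f : Fin m → F × F => ∑ j, (f j).1 * (f j).2 = K)).card
      = ∑ i ∈ Finset.range m,
          Nat.choose m i * (2 * Fintype.card F - 1) ^ i *
            (Fintype.card F - 1) ^ (m - i) *
            (Finset.univ.filter
              (fun y : Fin (m - i) → F => (∀ j, y j ≠ 0) ∧ ∑ j, y j = K)).card := by
  set A := 2 * Fintype.card F - 1 with hA
  set B := Fintype.card F - 1 with hB
  -- Step 1: fiberwise over the product vector g
  have step1 : (univ.filter (fun f : Fin m → F × F => ∑ j, (f j).1 * (f j).2 = K)).card
      = ∑ g ∈ univ.filter (fun g : Fin m → F => ∑ j, g j = K),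
          ∏ j, (univ.filter (fun p : F × F => p.1 * p.2 = g j)).card := by
    rw [Finset.card_eq_sum_card_fiberwise
      (f := fun (f : Fin m → F × F) (j : Fin m) => (f j).1 * (f j).2)
      (t := univ.filter (fun g : Fin m → F => ∑ j, g j = K))]
    · apply Finset.sum_congr rfl
      intro g hg
      simp only [mem_filter, mem_univ, true_and] at hg
      have heq : (univ.filter (fun f : Fin m → F × F => ∑ j, (f j).1 * (f j).2 = K)).filter
          (fun f => (fun j => (f j).1 * (f j).2) = g)
          = univ.filter (fun f : Fin m → F × F => ∀ j, (f j).1 * (f j).2 = g j) := by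
        ext f
        simp only [mem_filter, mem_univ, true_and, funext_iff]
        constructor
        · exact fun h => h.2
        · intro h
          refine ⟨?_, h⟩
          rw [show (∑ j, (f j).1 * (f j).2) = ∑ j, g j from
            Finset.sum_congr rfl fun j _ => h j, hg]
      rw [heq]
      rw [show (univ.filter fun f : Fin m → F × F => ∀ j, (f j).1 * (f j).2 = g j)
          = Fintype.piFinset (fun j => univ.filter (fun p : F × F => p.1 * p.2 = g j)) by
        ext f; simp [Fintype.mem_piFinset]]
      exact Fintype.card_piFinset _
    · intro f hf
      simp only [mem_coe, mem_filter, mem_univ, true_and] at hf ⊢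
      exact hf
  -- rewrite pair counts as if-then-else
  have step2 : ∀ g : Fin m → F,
      (∏ j, (univ.filter (fun p : F × F => p.1 * p.2 = g j)).card)
        = ∏ j, (if g j = 0 then A else B) := by
    intro g
    apply Finset.prod_congr rfl
    intro j _
    by_cases h : g j = 0
    · rw [if_pos h, h, hA]; exact pair_count_zero' F
    · rw [if_neg h, hB]; exact pair_count_ne' F _ h
  rw [step1]
  rw [Finset.sum_congr rfl (fun g _ => step2 g)]
  -- Step 3: group by zero set
  have step3 : ∑ g ∈ univ.filter (fun g : Fin m → F => ∑ j, g j = K),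
        ∏ j, (if g j = 0 then A else B)
      = ∑ s ∈ (univ : Finset (Fin m)).powerset,
          ∑ g ∈ (univ.filter (fun g : Fin m → F => ∑ j, g j = K)).filter
            (fun g => univ.filter (fun j => g j = 0) = s),
            ∏ j, (if g j = 0 then A else B) := by
    rw [Finset.sum_fiberwise_of_maps_to]
    intro g _
    exact Finset.mem_powerset.2 (Finset.subset_univ _)
  rw [step3]
  -- evaluate each fiber
  have step4 : ∀ s ∈ (univ : Finset (Fin m)).powerset,
      (∑ g ∈ (univ.filter (fun g : Fin m → F => ∑ j, g j = K)).filter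
          (fun g => univ.filter (fun j => g j = 0) = s),
          ∏ j, (if g j = 0 then A else B))
        = A ^ s.card * B ^ (m - s.card) *
            (univ.filter (fun y : Fin (m - s.card) → F =>
              (∀ j, y j ≠ 0) ∧ ∑ j, y j = K)).card := by
    intro s _
    have hfib : (univ.filter (fun g : Fin m → F => ∑ j, g j = K)).filter
          (fun g => univ.filter (fun j => g j = 0) = s)
        = univ.filter (fun g : Fin m → F => (∑ j, g j = K) ∧ ∀ j, g j = 0 ↔ j ∈ s) := by
      ext g
      simp only [mem_filter, mem_univ, true_and, and_congr_right_iff]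
      intro _
      constructor
      · intro h j
        rw [← h]; simp
      · intro h
        ext j; simp [h j]
    have hconst : ∀ g ∈ univ.filter
        (fun g : Fin m → F => (∑ j, g j = K) ∧ ∀ j, g j = 0 ↔ j ∈ s),
        (∏ j, (if g j = 0 then A else B)) = A ^ s.card * B ^ (m - s.card) := by
      intro g hg
      simp only [mem_filter, mem_univ, true_and] at hg
      have h2 : (∏ j ∈ (univ \ s), (if g j = 0 then A else B))
          * (∏ j ∈ s, (if g j = 0 then A else B))
          = ∏ j, (if g j = 0 then A else B) := Finset.prod_sdiff (subset_univ s)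
      have h3 : (∏ j ∈ s, (if g j = 0 then A else B)) = A ^ s.card := by
        rw [Finset.prod_congr rfl (fun j hj => if_pos ((hg.2 j).2 hj)), Finset.prod_const]
      have h4 : (∏ j ∈ (univ \ s), (if g j = 0 then A else B)) = B ^ (m - s.card) := by
        rw [Finset.prod_congr rfl (fun j hj => if_neg (fun h0 => by
          rw [Finset.mem_sdiff] at hj; exact hj.2 ((hg.2 j).1 h0)))]
        rw [Finset.prod_const, card_sdiff_of_subset (subset_univ s), card_univ, Fintype.card_fin]
      rw [← h2, h3, h4, mul_comm]
    rw [hfib, Finset.sum_congr rfl hconst, Finset.sum_const, smul_eq_mul, mul_comm]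
    rw [zeroset_count F m K s]
  rw [Finset.sum_congr rfl step4]
  -- group by cardinality
  rw [Finset.sum_powerset (univ : Finset (Fin m))]
  rw [card_univ, Fintype.card_fin]
  have step5 : ∀ i ∈ Finset.range (m + 1),
      (∑ s ∈ Finset.powersetCard i (univ : Finset (Fin m)),
        A ^ s.card * B ^ (m - s.card) *
          (univ.filter (fun y : Fin (m - s.card) → F =>
            (∀ j, y j ≠ 0) ∧ ∑ j, y j = K)).card)
      = Nat.choose m i * A ^ i * B ^ (m - i) *
          (univ.filter (fun y : Fin (m - i) → F =>
            (∀ j, y j ≠ 0) ∧ ∑ j, y j = K)).card := by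
    intro i _
    have : ∀ s ∈ Finset.powersetCard i (univ : Finset (Fin m)),
        A ^ s.card * B ^ (m - s.card) *
          (univ.filter (fun y : Fin (m - s.card) → F =>
            (∀ j, y j ≠ 0) ∧ ∑ j, y j = K)).card
        = A ^ i * B ^ (m - i) *
            (univ.filter (fun y : Fin (m - i) → F =>
              (∀ j, y j ≠ 0) ∧ ∑ j, y j = K)).card := by
      intro s hs
      rw [Finset.mem_powersetCard] at hs
      rw [hs.2]
    rw [Finset.sum_congr rfl this, Finset.sum_const, smul_eq_mul,
      Finset.card_powersetCard, card_univ, Fintype.card_fin]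
    ring
  rw [Finset.sum_congr rfl step5]
  -- drop the i = m term
  rw [Finset.sum_range_succ]
  have hlast : (univ.filter (fun y : Fin (m - m) → F =>
      (∀ j, y j ≠ 0) ∧ ∑ j, y j = K)).card = 0 := by
    rw [Finset.card_eq_zero]
    ext y
    simp only [mem_filter, mem_univ, true_and, notMem_empty, iff_false, not_and]
    intro _
    have hE : IsEmpty (Fin (m - m)) := by
      rw [Nat.sub_self]; exact Fin.isEmpty'
    rw [show (∑ j : Fin (m - m), y j) = 0 from by
      rw [Finset.univ_eq_empty, Finset.sum_empty]]
    exact fun h => hK h.symm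
  rw [hlast, mul_zero, add_zero]
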